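/- arXiv:2011.07265 — 3 statements merged into one kernel-verified Lean document; each statement's English description precedes it below -/
import Mathlib

section
/- For positive definite Hermitian matrix Y ∈ ℂ^{m×m} and any X ∈ ℂ^{m×n}, the function tr(X^H Y^{-1} X) satisfies tr(X^H Y^{-1} X) ≥ 2 Re(tr(X_t^H Y_t^{-1} X)) − tr(Y_t^{-1} X_t X_t^H Y_t^{-1} Y) for any fixed X_t ∈ ℂ^{m×n} and positive definite Y_t ∈ ℂ^{m×m} (up to an additive constant depending only on X_t, Y_t), with equality when (X,Y) = (X_t, Y_t). -/
open Matrix ComplexOrder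

lemma aux_trace_nonneg {k : ℕ} {S : Matrix (Fin k) (Fin k) ℂ} (hS : S.PosSemidef) :
    0 ≤ S.trace.re := by
  have h : ∀ j, 0 ≤ (S j j).re := by
    intro j
    have := hS.dotProduct_mulVec_nonneg (Pi.single j 1)
    have hval : star (Pi.single j 1 : Fin k → ℂ) ⬝ᵥ S *ᵥ Pi.single j 1 = S j j := by
      simp [dotProduct, mulVec, Pi.single_apply, Finset.sum_ite_eq, mul_comm]
    rw [hval] at this
    exact (Complex.le_def.mp this).1
  rw [Matrix.trace, Complex.re_sum]
  exact Finset.sum_nonneg fun j _ => h j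

/-- MM minorization of `tr(Xᴴ Y⁻¹ X)` (Lemma 1): for positive definite `Y, Yt`,
`tr(XᴴY⁻¹X) ≥ 2 Re tr(Xtᴴ Yt⁻¹ X) − tr(Yt⁻¹ Xt Xtᴴ Yt⁻¹ Y)` with equality at `(Xt, Yt)`. -/
theorem stmt_0 {m n : ℕ} (X Xt : Matrix (Fin m) (Fin n) ℂ)
    (Y Yt : Matrix (Fin m) (Fin m) ℂ) (hY : Y.PosDef) (hYt : Yt.PosDef) :
    (2 * ((Xtᴴ * Yt⁻¹ * X).trace).re ≤
      ((Xᴴ * Y⁻¹ * X).trace).re + ((Yt⁻¹ * Xt * Xtᴴ * Yt⁻¹ * Y).trace).re) ∧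
    (2 * ((Xtᴴ * Yt⁻¹ * Xt).trace).re =
      ((Xtᴴ * Yt⁻¹ * Xt).trace).re + ((Yt⁻¹ * Xt * Xtᴴ * Yt⁻¹ * Yt).trace).re) := by
  have hYinv : Y⁻¹ * Y = 1 := Matrix.nonsing_inv_mul Y ((Matrix.isUnit_iff_isUnit_det Y).mp hY.isUnit)
  have hYinv' : Y * Y⁻¹ = 1 := Matrix.mul_nonsing_inv Y ((Matrix.isUnit_iff_isUnit_det Y).mp hY.isUnit)
  have hYtinv : Yt⁻¹ * Yt = 1 := Matrix.nonsing_inv_mul Yt ((Matrix.isUnit_iff_isUnit_det Yt).mp hYt.isUnit)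
  have hYH : (Y⁻¹)ᴴ = Y⁻¹ := hY.inv.isHermitian.eq
  have hYtH : (Yt⁻¹)ᴴ = Yt⁻¹ := hYt.inv.isHermitian.eq
  constructor
  · set M : Matrix (Fin m) (Fin n) ℂ := Y⁻¹ * X - Yt⁻¹ * Xt with hM
    have hpsd : (Mᴴ * Y * M).PosSemidef := hY.posSemidef.conjTranspose_mul_mul_same M
    have h0 := aux_trace_nonneg hpsd
    have hexp : Mᴴ * Y * M =
        Xᴴ * Y⁻¹ * X - Xᴴ * Yt⁻¹ * Xt - Xtᴴ * Yt⁻¹ * X + Xtᴴ * Yt⁻¹ * Y * Yt⁻¹ * Xt := by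
      rw [hM]
      simp only [conjTranspose_sub, conjTranspose_mul, hYH, hYtH]
      rw [Matrix.sub_mul, Matrix.sub_mul, Matrix.mul_sub, Matrix.mul_sub]
      have e1 : Xᴴ * Y⁻¹ * Y * (Y⁻¹ * X) = Xᴴ * Y⁻¹ * X := by
        rw [Matrix.mul_assoc (Xᴴ * Y⁻¹), ← Matrix.mul_assoc Y, hYinv', Matrix.one_mul]
      have e2 : Xᴴ * Y⁻¹ * Y * (Yt⁻¹ * Xt) = Xᴴ * Yt⁻¹ * Xt := by
        rw [Matrix.mul_assoc Xᴴ, hYinv, Matrix.mul_one, Matrix.mul_assoc]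
      have e3 : Xtᴴ * Yt⁻¹ * Y * (Y⁻¹ * X) = Xtᴴ * Yt⁻¹ * X := by
        rw [Matrix.mul_assoc (Xtᴴ * Yt⁻¹), ← Matrix.mul_assoc Y, hYinv', Matrix.one_mul]
      have e4 : Xtᴴ * Yt⁻¹ * Y * (Yt⁻¹ * Xt) = Xtᴴ * Yt⁻¹ * Y * Yt⁻¹ * Xt := by
        rw [Matrix.mul_assoc (Xtᴴ * Yt⁻¹ * Y)]
      rw [e1, e2, e3, e4]
      abel
    have htr2 : (Xᴴ * Yt⁻¹ * Xt).trace = star (Xtᴴ * Yt⁻¹ * X).trace := by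
      rw [← Matrix.trace_conjTranspose]
      congr 1
      simp [conjTranspose_mul, hYtH, Matrix.mul_assoc]
    have htr4 : (Xtᴴ * Yt⁻¹ * Y * Yt⁻¹ * Xt).trace =
        (Yt⁻¹ * Xt * Xtᴴ * Yt⁻¹ * Y).trace := by
      rw [show Xtᴴ * Yt⁻¹ * Y * Yt⁻¹ * Xt = Xtᴴ * (Yt⁻¹ * Y * Yt⁻¹ * Xt) by
        simp [Matrix.mul_assoc]]
      rw [Matrix.trace_mul_comm]
      simp [Matrix.mul_assoc]
      rw [show Yt⁻¹ * (Y * (Yt⁻¹ * (Xt * Xtᴴ))) = Yt⁻¹ * Y * (Yt⁻¹ * (Xt * Xtᴴ)) by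
        simp [Matrix.mul_assoc]]
      rw [Matrix.trace_mul_comm]
      simp [Matrix.mul_assoc]
    rw [hexp] at h0
    simp only [Matrix.trace_add, Matrix.trace_sub, Complex.add_re, Complex.sub_re,
      htr2, htr4, Complex.star_def, Complex.conj_re] at h0
    linarith
  · have e : Yt⁻¹ * Xt * Xtᴴ * Yt⁻¹ * Yt = Yt⁻¹ * Xt * Xtᴴ := by
      rw [Matrix.mul_assoc (Yt⁻¹ * Xt * Xtᴴ), hYtinv, Matrix.mul_one]
    rw [e]
    have : (Yt⁻¹ * Xt * Xtᴴ).trace = (Xtᴴ * Yt⁻¹ * Xt).trace := by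
      rw [Matrix.trace_mul_comm, Matrix.mul_assoc]
    rw [this]; ring
end

section
/- Let R be the M×M exponential correlation matrix with entries R_{i,j} = ρ^{|i−j|} for 0 < ρ < 1. Then tr(R^{-1}) = (M + (M−2)ρ²)/(1 − ρ²). -/
open Matrix Finset

noncomputable def cEnt (M : ℕ) (ρ : ℝ) (j k : ℕ) : ℝ :=
  if j = k then (if k = 0 ∨ k = M - 1 then 1 else 1 + ρ ^ 2)
  else if j + 1 = k ∨ k + 1 = j then -ρ else 0

lemma key (M : ℕ) (hM : 2 ≤ M) (ρ : ℝ) (i k : ℕ) (hi : i < M) (hk : k < M) :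
    ∑ j ∈ Finset.range M, ρ ^ Nat.dist i j * cEnt M ρ j k
      = (1 - ρ ^ 2) * (if i = k then 1 else 0) := by
  by_cases hk0 : k = 0
  · subst hk0
    have hsum : ∀ j, ρ ^ Nat.dist i j * cEnt M ρ j 0
        = (if j = 0 then ρ ^ Nat.dist i 0 else 0)
          + (if j = 1 then -(ρ ^ Nat.dist i 1 * ρ) else 0) := by
      intro j
      unfold cEnt
      by_cases h0 : j = 0
      · rw [h0, if_pos rfl, if_pos (Or.inl rfl), if_pos rfl, if_neg (by omega)]; ring
      by_cases h1 : j = 1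
      · rw [h1, if_neg (by omega), if_pos (Or.inr rfl), if_neg (by omega), if_pos rfl]; ring
      · rw [if_neg h0, if_neg (by omega), if_neg h0, if_neg h1]; ring
    rw [Finset.sum_congr rfl (fun j _ => hsum j), Finset.sum_add_distrib,
      Finset.sum_ite_eq' (Finset.range M) 0, Finset.sum_ite_eq' (Finset.range M) 1,
      if_pos (Finset.mem_range.mpr (by omega : 0 < M)),
      if_pos (Finset.mem_range.mpr (by omega : 1 < M))]
    by_cases h : i = 0
    · rw [if_pos h, h]
      have h1 : Nat.dist 0 0 = 0 := by unfold Nat.dist; omega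
      have h2 : Nat.dist 0 1 = 1 := by unfold Nat.dist; omega
      rw [h1, h2]; ring
    · rw [if_neg h]
      have h1 : Nat.dist i 0 = (i - 1) + 1 := by unfold Nat.dist; omega
      have h2 : Nat.dist i 1 = i - 1 := by unfold Nat.dist; omega
      rw [h1, h2, pow_succ]; ring
  · by_cases hkM : k = M - 1
    · have hk1 : 1 ≤ k := by omega
      have hsum : ∀ j < M, ρ ^ Nat.dist i j * cEnt M ρ j k
          = (if j = k then ρ ^ Nat.dist i k else 0)
            + (if j = k - 1 then -(ρ ^ Nat.dist i (k-1) * ρ) else 0) := by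
        intro j hjM
        unfold cEnt
        by_cases h0 : j = k
        · rw [h0, if_pos rfl, if_pos (Or.inr hkM), if_pos rfl, if_neg (by omega)]; ring
        by_cases h1 : j = k - 1
        · rw [h1, if_neg (by omega), if_pos (Or.inl (by omega)), if_neg (by omega), if_pos rfl]
          ring
        · rw [if_neg h0, if_neg (by omega), if_neg h0, if_neg h1]; ring
      rw [Finset.sum_congr rfl (fun j hj => hsum j (Finset.mem_range.mp hj)),
        Finset.sum_add_distrib,
        Finset.sum_ite_eq' (Finset.range M) k, Finset.sum_ite_eq' (Finset.range M) (k-1),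
        if_pos (Finset.mem_range.mpr hk),
        if_pos (Finset.mem_range.mpr (by omega : k - 1 < M))]
      by_cases h : i = k
      · rw [if_pos h, h]
        have h1 : Nat.dist k k = 0 := by unfold Nat.dist; omega
        have h2 : Nat.dist k (k - 1) = 1 := by unfold Nat.dist; omega
        rw [h1, h2]; ring
      · have hik : i < k := by omega
        have h1 : Nat.dist i k = (k - 1 - i) + 1 := by unfold Nat.dist; omega
        have h2 : Nat.dist i (k - 1) = k - 1 - i := by unfold Nat.dist; omega
        rw [if_neg h, h1, h2, pow_succ]; ring
    · have hk1 : 1 ≤ k := by omega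
      have hkM2 : k + 1 < M := by omega
      have hsum : ∀ j, ρ ^ Nat.dist i j * cEnt M ρ j k
          = (if j = k then ρ ^ Nat.dist i k * (1 + ρ ^ 2) else 0)
            + (if j = k - 1 then -(ρ ^ Nat.dist i (k-1) * ρ) else 0)
            + (if j = k + 1 then -(ρ ^ Nat.dist i (k+1) * ρ) else 0) := by
        intro j
        unfold cEnt
        by_cases h0 : j = k
        · rw [h0, if_pos rfl, if_neg (by push_neg; exact ⟨hk0, hkM⟩), if_pos rfl,
            if_neg (by omega), if_neg (by omega)]
          ring
        by_cases h1 : j = k - 1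
        · rw [h1, if_neg (by omega), if_pos (Or.inl (by omega)), if_neg (by omega),
            if_pos rfl, if_neg (by omega)]
          ring
        by_cases h2 : j = k + 1
        · rw [h2, if_neg (by omega), if_pos (Or.inr rfl), if_neg (by omega),
            if_neg (by omega), if_pos rfl]
          ring
        · rw [if_neg h0, if_neg (by omega), if_neg h0, if_neg h1, if_neg h2]; ring
      rw [Finset.sum_congr rfl (fun j _ => hsum j), Finset.sum_add_distrib,
        Finset.sum_add_distrib, Finset.sum_ite_eq' (Finset.range M) k,
        Finset.sum_ite_eq' (Finset.range M) (k-1), Finset.sum_ite_eq' (Finset.range M) (k+1),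
        if_pos (Finset.mem_range.mpr hk),
        if_pos (Finset.mem_range.mpr (by omega : k - 1 < M)),
        if_pos (Finset.mem_range.mpr hkM2)]
      rcases lt_trichotomy i k with h | h | h
      · have h1 : Nat.dist i k = (k - 1 - i) + 1 := by unfold Nat.dist; omega
        have h2 : Nat.dist i (k - 1) = k - 1 - i := by unfold Nat.dist; omega
        have h3 : Nat.dist i (k + 1) = (k - 1 - i) + 1 + 1 := by unfold Nat.dist; omega
        rw [if_neg (by omega), h1, h2, h3, pow_succ, pow_succ]; ring
      · rw [if_pos h, h]
        have h1 : Nat.dist k k = 0 := by unfold Nat.dist; omega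
        have h2 : Nat.dist k (k - 1) = 1 := by unfold Nat.dist; omega
        have h3 : Nat.dist k (k + 1) = 1 := by unfold Nat.dist; omega
        rw [h1, h2, h3]; ring
      · have h1 : Nat.dist i k = (i - k - 1) + 1 := by unfold Nat.dist; omega
        have h2 : Nat.dist i (k - 1) = (i - k - 1) + 1 + 1 := by unfold Nat.dist; omega
        have h3 : Nat.dist i (k + 1) = i - k - 1 := by unfold Nat.dist; omega
        rw [if_neg (by omega), h1, h2, h3, pow_succ, pow_succ]; ring

/-- For the `M×M` exponential correlation matrix `R i j = ρ^|i−j|`, `0 < ρ < 1`,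
`tr(R⁻¹) = (M + (M−2)ρ²)/(1 − ρ²)`. -/
theorem stmt_3 (M : ℕ) (hM : 1 ≤ M) (ρ : ℝ) (hρ0 : 0 < ρ) (hρ1 : ρ < 1) :
    (Matrix.of fun i j : Fin M => ρ ^ Nat.dist (i : ℕ) (j : ℕ))⁻¹.trace =
      ((M : ℝ) + ((M : ℝ) - 2) * ρ ^ 2) / (1 - ρ ^ 2) := by
  have hne : (1 : ℝ) - ρ ^ 2 ≠ 0 := by nlinarith
  by_cases hM1 : M = 1
  · subst hM1
    have hR : (Matrix.of fun i j : Fin 1 => ρ ^ Nat.dist (i : ℕ) (j : ℕ)) = 1 := by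
      ext i j
      fin_cases i; fin_cases j
      simp [Nat.dist, Matrix.one_apply]
    rw [hR, inv_one, trace_one]
    push_cast
    field_simp
    simp only [Fintype.card_fin, Nat.cast_one]; ring
  · have hM2 : 2 ≤ M := by omega
    set R : Matrix (Fin M) (Fin M) ℝ :=
      Matrix.of fun i j : Fin M => ρ ^ Nat.dist (i : ℕ) (j : ℕ) with hRdef
    set B : Matrix (Fin M) (Fin M) ℝ :=
      Matrix.of fun j k : Fin M => (1 - ρ ^ 2)⁻¹ * cEnt M ρ (j : ℕ) (k : ℕ) with hBdef
    have hRB : R * B = 1 := by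
      ext i k
      rw [Matrix.mul_apply]
      simp only [hRdef, hBdef, Matrix.of_apply]
      have hc : ∀ j : Fin M,
          ρ ^ Nat.dist (i : ℕ) (j : ℕ) * ((1 - ρ ^ 2)⁻¹ * cEnt M ρ (j : ℕ) (k : ℕ))
          = (1 - ρ ^ 2)⁻¹ * (ρ ^ Nat.dist (i : ℕ) (j : ℕ) * cEnt M ρ (j : ℕ) (k : ℕ)) := by
        intro j; ring
      rw [Finset.sum_congr rfl (fun j _ => hc j), ← Finset.mul_sum,
        Fin.sum_univ_eq_sum_range (fun j => ρ ^ Nat.dist (i : ℕ) j * cEnt M ρ j (k : ℕ)) M,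
        key M hM2 ρ (i : ℕ) (k : ℕ) i.isLt k.isLt, inv_mul_cancel_left₀ hne,
        Matrix.one_apply]
      simp [Fin.ext_iff]
    have hinv : R⁻¹ = B := inv_eq_right_inv hRB
    rw [hinv]
    unfold Matrix.trace
    simp only [hBdef, Matrix.diag_apply, Matrix.of_apply]
    rw [← Finset.mul_sum,
      Fin.sum_univ_eq_sum_range (fun k => cEnt M ρ k k) M]
    have hdiag : ∀ k ∈ Finset.range M, cEnt M ρ k k
        = (1 + ρ ^ 2) + (if k = 0 then -ρ ^ 2 else 0) + (if k = M - 1 then -ρ ^ 2 else 0) := by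
      intro k hk
      unfold cEnt
      rw [if_pos rfl]
      by_cases h0 : k = 0
      · rw [if_pos (Or.inl h0), if_pos h0, if_neg (by omega)]; ring
      by_cases h1 : k = M - 1
      · rw [if_pos (Or.inr h1), if_neg h0, if_pos h1]; ring
      · rw [if_neg (by push_neg; exact ⟨h0, h1⟩), if_neg h0, if_neg h1]; ring
    rw [Finset.sum_congr rfl hdiag, Finset.sum_add_distrib, Finset.sum_add_distrib,
      Finset.sum_ite_eq' (Finset.range M) 0, Finset.sum_ite_eq' (Finset.range M) (M-1),
      Finset.sum_const, if_pos (Finset.mem_range.mpr (by omega : 0 < M)),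
      if_pos (Finset.mem_range.mpr (by omega : M - 1 < M))]
    rw [Finset.card_range, nsmul_eq_mul, div_eq_inv_mul]
    ring
end

section
/- Let R_ub and R_lb be M×M Hermitian positive definite matrices with unit diagonal entries, and let σ² > 0, T_p > 0, K ≥ 1. Define MSE(R_ub, R_lb) = Σ_{i=1}^M [ 1/(1/λ_i(R_ub) + T_p/σ²) + K/(1/λ_i(R_lb) + T_p/σ²) ]. Then MSE(R_ub, R_lb) ≤ M(K+1)/(1 + T_p/σ²), with equality if and only if R_ub = R_lb = I_M. -/
open Matrix ComplexOrder

private lemma tangent_diff (c x : ℝ) (hc : 0 < c) (hx : 0 < x) :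
    (1 / (1 + c) + (x - 1) / (1 + c) ^ 2) - 1 / (1 / x + c)
      = c * (x - 1) ^ 2 / ((1 + c) ^ 2 * (1 + c * x)) := by
  have h1 : (0 : ℝ) < 1 + c := by linarith
  have h2 : (0 : ℝ) < 1 + c * x := by positivity
  have h3 : (0 : ℝ) < 1 / x + c := by positivity
  field_simp
  ring

private lemma tangent_le (c x : ℝ) (hc : 0 < c) (hx : 0 < x) :
    1 / (1 / x + c) ≤ 1 / (1 + c) + (x - 1) / (1 + c) ^ 2 := by
  have h := tangent_diff c x hc hx
  have h2 : (0 : ℝ) < 1 + c * x := by positivity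
  have hnn : 0 ≤ c * (x - 1) ^ 2 / ((1 + c) ^ 2 * (1 + c * x)) := by positivity
  linarith

private lemma tangent_eq_iff (c x : ℝ) (hc : 0 < c) (hx : 0 < x) :
    1 / (1 / x + c) = 1 / (1 + c) + (x - 1) / (1 + c) ^ 2 ↔ x = 1 := by
  have h := tangent_diff c x hc hx
  have h1 : (0 : ℝ) < 1 + c := by linarith
  have h2 : (0 : ℝ) < 1 + c * x := by positivity
  constructor
  · intro he
    rw [he, sub_self] at h
    field_simp at h
    have h0 : c * (x - 1) ^ 2 = 0 := by linarith
    rcases mul_eq_zero.mp h0 with h' | h'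
    · linarith
    · have := (pow_eq_zero_iff (n := 2) (by norm_num)).mp h'; linarith
  · intro he
    subst he
    simp

private lemma sum_eigenvalues_eq {M : ℕ} (A : Matrix (Fin M) (Fin M) ℂ)
    (hA : A.IsHermitian) (hd : ∀ i, A i i = 1) :
    ∑ i, hA.eigenvalues i = (M : ℝ) := by
  have htr : A.trace = (M : ℂ) := by
    simp only [Matrix.trace, Matrix.diag]
    simp [hd]
  have h2 : A.trace = ∑ i, (hA.eigenvalues i : ℂ) := by
    conv_lhs => rw [hA.spectral_theorem, Unitary.conjStarAlgAut_apply]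
    rw [Matrix.trace_mul_cycle]
    rw [Unitary.coe_star_mul_self, one_mul, Matrix.trace_diagonal]
    rfl
  have : ((∑ i, hA.eigenvalues i : ℝ) : ℂ) = (M : ℂ) := by
    push_cast
    rw [← h2, htr]
  exact_mod_cast this

private lemma eq_one_of_eigenvalues_eq_one {M : ℕ} (A : Matrix (Fin M) (Fin M) ℂ)
    (hA : A.IsHermitian) (h : ∀ i, hA.eigenvalues i = 1) : A = 1 := by
  rw [hA.spectral_theorem]
  have : Matrix.diagonal (RCLike.ofReal ∘ hA.eigenvalues) = (1 : Matrix (Fin M) (Fin M) ℂ) := by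
    ext i j
    rcases eq_or_ne i j with rfl | hij
    · simp [h i]
    · simp [Matrix.diagonal_apply_ne _ hij, Matrix.one_apply_ne hij]
  rw [Unitary.conjStarAlgAut_apply, this, mul_one]
  exact (Matrix.mem_unitaryGroup_iff).mp hA.eigenvectorUnitary.2

private lemma eigenvalues_eq_one_of_eq_one {M : ℕ} (A : Matrix (Fin M) (Fin M) ℂ)
    (hA : A.IsHermitian) (h : A = 1) : ∀ i, hA.eigenvalues i = 1 := by
  subst h
  intro i
  have hd := hA.conjStarAlgAut_star_eigenvectorUnitary
  rw [map_one] at hd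
  have := congrFun (congrFun hd.symm i) i
  simp only [Matrix.diagonal_apply_eq, Function.comp_apply, Matrix.one_apply_eq] at this
  have h1 : ((hA.eigenvalues i : ℝ) : ℂ) = 1 := this
  exact_mod_cast h1

/-- The LMMSE MSE `Σ_i [1/(1/λ_i(R_ub)+T_p/σ²) + K/(1/λ_i(R_lb)+T_p/σ²)]` of unit-diagonal
positive definite correlation matrices is at most `M(K+1)/(1+T_p/σ²)`, with equality iff
`R_ub = R_lb = I`. -/
theorem stmt_7 (M K : ℕ) (hM : 1 ≤ M) (hK : 1 ≤ K) (Tp σ2 : ℝ) (hTp : 0 < Tp)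
    (hσ : 0 < σ2) (Rub Rlb : Matrix (Fin M) (Fin M) ℂ)
    (hub : Rub.PosDef) (hlb : Rlb.PosDef)
    (hdub : ∀ i, Rub i i = 1) (hdlb : ∀ i, Rlb i i = 1) :
    (∑ i, (1 / (1 / hub.1.eigenvalues i + Tp / σ2)
        + (K : ℝ) * (1 / (1 / hlb.1.eigenvalues i + Tp / σ2)))
      ≤ (M : ℝ) * ((K : ℝ) + 1) / (1 + Tp / σ2)) ∧
    ((∑ i, (1 / (1 / hub.1.eigenvalues i + Tp / σ2)
        + (K : ℝ) * (1 / (1 / hlb.1.eigenvalues i + Tp / σ2)))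
      = (M : ℝ) * ((K : ℝ) + 1) / (1 + Tp / σ2)) ↔ Rub = 1 ∧ Rlb = 1) := by
  set c : ℝ := Tp / σ2 with hc_def
  have hc : 0 < c := div_pos hTp hσ
  have hKpos : (0 : ℝ) < (K : ℝ) := by exact_mod_cast Nat.lt_of_lt_of_le Nat.zero_lt_one hK
  set a : Fin M → ℝ := hub.1.eigenvalues with ha_def
  set b : Fin M → ℝ := hlb.1.eigenvalues with hb_def
  have hapos : ∀ i, 0 < a i := fun i => hub.eigenvalues_pos i
  have hbpos : ∀ i, 0 < b i := fun i => hlb.eigenvalues_pos i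
  have hsa : ∑ i, a i = (M : ℝ) := sum_eigenvalues_eq Rub hub.1 hdub
  have hsb : ∑ i, b i = (M : ℝ) := sum_eigenvalues_eq Rlb hlb.1 hdlb
  set f : Fin M → ℝ := fun i => 1 / (1 / a i + c) + (K : ℝ) * (1 / (1 / b i + c)) with hf_def
  set g : Fin M → ℝ := fun i =>
    (1 / (1 + c) + (a i - 1) / (1 + c) ^ 2)
      + (K : ℝ) * (1 / (1 + c) + (b i - 1) / (1 + c) ^ 2) with hg_def
  have hfg : ∀ i ∈ Finset.univ, f i ≤ g i := by
    intro i _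
    have h1 := tangent_le c (a i) hc (hapos i)
    have h2 := tangent_le c (b i) hc (hbpos i)
    have h2' := mul_le_mul_of_nonneg_left h2 hKpos.le
    simpa [hf_def, hg_def] using add_le_add h1 h2'
  have hsum_g : ∑ i, g i = (M : ℝ) * ((K : ℝ) + 1) / (1 + c) := by
    have hrw : ∀ i ∈ Finset.univ, g i
        = (1 + (K : ℝ)) / (1 + c) + ((a i - 1) + (K : ℝ) * (b i - 1)) * ((1 + c) ^ 2)⁻¹ := by
      intro i _
      simp only [hg_def]
      ring
    rw [Finset.sum_congr rfl hrw, Finset.sum_add_distrib, Finset.sum_const, ← Finset.sum_mul,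
      Finset.sum_add_distrib, ← Finset.mul_sum, Finset.sum_sub_distrib, Finset.sum_sub_distrib,
      hsa, hsb]
    simp only [Finset.sum_const, Finset.card_univ, Fintype.card_fin, nsmul_eq_mul, smul_eq_mul,
      mul_one]
    ring
  have hfeq : ∀ i, (f i = g i ↔ a i = 1 ∧ b i = 1) := by
    intro i
    constructor
    · intro h
      have h1 := tangent_le c (a i) hc (hapos i)
      have h2 := tangent_le c (b i) hc (hbpos i)
      have h2' := mul_le_mul_of_nonneg_left h2 hKpos.le
      simp only [hf_def, hg_def] at h
      have e1 : 1 / (1 / a i + c) = 1 / (1 + c) + (a i - 1) / (1 + c) ^ 2 := by linarith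
      have e2' : (K : ℝ) * (1 / (1 / b i + c))
          = (K : ℝ) * (1 / (1 + c) + (b i - 1) / (1 + c) ^ 2) := by linarith
      have e2 : 1 / (1 / b i + c) = 1 / (1 + c) + (b i - 1) / (1 + c) ^ 2 :=
        mul_left_cancel₀ (ne_of_gt hKpos) e2'
      exact ⟨(tangent_eq_iff c (a i) hc (hapos i)).mp e1,
        (tangent_eq_iff c (b i) hc (hbpos i)).mp e2⟩
    · rintro ⟨h1, h2⟩
      simp only [hf_def, hg_def, h1, h2]
      norm_num
  constructor
  · calc ∑ i, f i ≤ ∑ i, g i := Finset.sum_le_sum hfg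
      _ = _ := hsum_g
  · rw [← hsum_g]
    rw [Finset.sum_eq_sum_iff_of_le hfg]
    constructor
    · intro h
      have hall : ∀ i, a i = 1 ∧ b i = 1 := fun i => (hfeq i).mp (h i (Finset.mem_univ i))
      exact ⟨eq_one_of_eigenvalues_eq_one Rub hub.1 (fun i => (hall i).1),
        eq_one_of_eigenvalues_eq_one Rlb hlb.1 (fun i => (hall i).2)⟩
    · rintro ⟨h1, h2⟩ i _
      exact (hfeq i).mpr ⟨eigenvalues_eq_one_of_eq_one Rub hub.1 h1 i,
        eigenvalues_eq_one_of_eq_one Rlb hlb.1 h2 i⟩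
end
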